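/- Let k be a field of characteristic zero, B a k-algebra that is an integral domain, and D a locally nilpotent k-derivation of B. Then the kernel of D is an inert subring of B: if f, g ∈ B are nonzero and D(fg) = 0 with products in ker D, then Df = 0 and Dg = 0. -/

import Mathlib

/-- A derivation is *locally nilpotent* if every element is killed by some iterate. -/
def IsLND {k B : Type*} [CommRing k] [CommRing B] [Algebra k B]
    (D : Derivation k B B) : Prop :=
  ∀ b : B, ∃ n : ℕ, (D.toLinearMap ^ n) b = 0

/-- A derivation *has a slice* if `1` is in its image. -/
def HasSlice {k B : Type*} [CommRing k] [CommRing B] [Algebra k B]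
    (D : Derivation k B B) : Prop :=
  ∃ s : B, D s = 1

/-- The kernel of a derivation, as a subalgebra. -/
def lndKer {k B : Type*} [CommRing k] [CommRing B] [Algebra k B]
    (D : Derivation k B B) : Subalgebra k B where
  carrier := {b | D b = 0}
  mul_mem' := by
    intro a b ha hb
    simp only [Set.mem_setOf_eq] at *
    simp [D.leibniz, ha, hb]
  add_mem' := by
    intro a b ha hb
    simp only [Set.mem_setOf_eq] at *
    simp [ha, hb]
  algebraMap_mem' := fun r => D.map_algebraMap r

/-- The Makar-Limanov invariant: intersection of the kernels of all locally
nilpotent derivations. -/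
def ML (k : Type*) {B : Type*} [CommRing k] [CommRing B] [Algebra k B] : Subalgebra k B :=
  ⨅ D ∈ {D : Derivation k B B | IsLND D}, lndKer D

/-- The Makar-Limanov–Freudenburg invariant: intersection of the kernels of all locally
nilpotent derivations admitting a slice (equal to `⊤ = B` if none exist). -/
def MLstar (k : Type*) {B : Type*} [CommRing k] [CommRing B] [Algebra k B] : Subalgebra k B :=
  ⨅ D ∈ {D : Derivation k B B | IsLND D ∧ HasSlice D}, lndKer D

/-- A `k`-algebra is *rigid* if it admits no nonzero locally nilpotent derivation. -/
def IsRigid (k B : Type*) [CommRing k] [CommRing B] [Algebra k B] : Prop :=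
  ∀ D : Derivation k B B, IsLND D → D = 0

/-- The extension `A ⊆ B` has transcendence degree `n`. -/
def TrdegEq (A B : Type*) [CommRing A] [CommRing B] [Algebra A B] (n : ℕ) : Prop :=
  (∃ x : Fin n → B, AlgebraicIndependent A x) ∧
    ∀ x : Fin (n + 1) → B, ¬ AlgebraicIndependent A x

/-- A subring `A` of a domain `B` is *inert* if `f * g ∈ A` for nonzero `f, g`
implies `f ∈ A` and `g ∈ A`. -/
def IsInert {B : Type*} [CommRing B] (A : Subring B) : Prop :=
  ∀ f g : B, f ≠ 0 → g ≠ 0 → f * g ∈ A → f ∈ A ∧ g ∈ A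

open Finset

lemma iterate_D_mul {k B : Type*} [CommRing k] [CommRing B] [Algebra k B]
    (D : Derivation k B B) (p q : B) (n : ℕ) :
    (⇑D)^[n] (p * q) =
      ∑ i ∈ range n.succ, (n.choose i • ((⇑D)^[n - i] p * (⇑D)^[i] q)) := by
  induction n with
  | zero => simp [Finset.range]
  | succ n IH =>
    have Dmul : ∀ a b : B, D (a * b) = D a * b + a * D b := by
      intro a b; rw [D.leibniz]; ring_nf
    calc
      (⇑D)^[n + 1] (p * q) =
          D (∑ i ∈ range n.succ, n.choose i • ((⇑D)^[n - i] p * (⇑D)^[i] q)) := by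
        rw [Function.iterate_succ_apply', IH]
      _ = (∑ i ∈ range n.succ, n.choose i • ((⇑D)^[n - i + 1] p * (⇑D)^[i] q)) +
          ∑ i ∈ range n.succ, n.choose i • ((⇑D)^[n - i] p * (⇑D)^[i + 1] q) := by
        rw [map_sum]
        simp_rw [map_nsmul, Dmul, Function.iterate_succ_apply', smul_add, sum_add_distrib]
      _ = (∑ i ∈ range n.succ,
                n.choose i.succ • ((⇑D)^[n - i] p * (⇑D)^[i + 1] q)) +
              1 • ((⇑D)^[n + 1] p * (⇑D)^[0] q) +
            ∑ i ∈ range n.succ, n.choose i • ((⇑D)^[n - i] p * (⇑D)^[i + 1] q) :=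
        ?_
      _ = ((∑ i ∈ range n.succ, n.choose i • ((⇑D)^[n - i] p * (⇑D)^[i + 1] q)) +
              ∑ i ∈ range n.succ,
                n.choose i.succ • ((⇑D)^[n - i] p * (⇑D)^[i + 1] q)) +
            1 • ((⇑D)^[n + 1] p * (⇑D)^[0] q) := by
        rw [add_comm, add_assoc]
      _ = (∑ i ∈ range n.succ,
              (n + 1).choose (i + 1) • ((⇑D)^[n + 1 - (i + 1)] p * (⇑D)^[i + 1] q)) +
            1 • ((⇑D)^[n + 1] p * (⇑D)^[0] q) := by
        simp_rw [Nat.choose_succ_succ, Nat.succ_sub_succ, add_smul, sum_add_distrib]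
      _ = ∑ i ∈ range n.succ.succ,
            n.succ.choose i • ((⇑D)^[n.succ - i] p * (⇑D)^[i] q) := by
        rw [sum_range_succ' _ n.succ, Nat.choose_zero_right, tsub_zero]
    congr
    refine (sum_range_succ' _ _).trans (congr_arg₂ (· + ·) ?_ ?_)
    · rw [sum_range_succ, Nat.choose_succ_self, zero_smul, add_zero]
      refine sum_congr rfl fun i hi => ?_
      rw [mem_range] at hi
      congr
      omega
    · rw [Nat.choose_zero_right, tsub_zero]

-- key: if Df ≠ 0 then D(fg) ≠ 0 for g ≠ 0
open scoped Classical in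
lemma key {k B : Type*} [Field k] [CharZero k] [CommRing B] [IsDomain B] [Algebra k B]
    (D : Derivation k B B) (hD : IsLND D) (f g : B) (hf : D f ≠ 0) (hg : g ≠ 0) :
    D (f * g) ≠ 0 := by
  haveI : CharZero B := charZero_of_injective_algebraMap (algebraMap k B).injective
  have iter0 : ∀ j : ℕ, (⇑D)^[j] (0 : B) = 0 := fun j =>
    Function.iterate_fixed (map_zero D) j
  -- maximal nonvanishing index
  have hmax : ∀ b : B, b ≠ 0 → ∃ m : ℕ, (⇑D)^[m] b ≠ 0 ∧ ∀ j, m < j → (⇑D)^[j] b = 0 := by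
    intro b hb
    obtain ⟨n, hn⟩ := hD b
    rw [Module.End.pow_apply] at hn
    have hn' : (⇑D)^[n] b = 0 := hn
    have hex : ∃ n, (⇑D)^[n] b = 0 := ⟨n, hn'⟩
    set a := Nat.find hex with ha
    have ha0 : 0 < a := by
      rcases Nat.eq_zero_or_pos a with h | h
      · exfalso; have := Nat.find_spec hex; rw [← ha, h] at this; exact hb this
      · exact h
    refine ⟨a - 1, ?_, ?_⟩
    · exact Nat.find_min hex (by omega)
    · intro j hj
      have : a ≤ j := by omega
      have h0 : (⇑D)^[a] b = 0 := Nat.find_spec hex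
      calc (⇑D)^[j] b = (⇑D)^[j - a] ((⇑D)^[a] b) := by
            rw [← Function.iterate_add_apply]; congr 1; omega
        _ = 0 := by rw [h0, iter0]
  obtain ⟨m, hm1, hm2⟩ := hmax f (fun h => hf (by rw [h, map_zero]))
  obtain ⟨n, hn1, hn2⟩ := hmax g hg
  have hm1' : 1 ≤ m := by
    by_contra h
    push_neg at h
    interval_cases m
    exact hf (hm2 1 one_pos)
  intro hDfg
  have hiter : (⇑D)^[m + n] (f * g) = 0 := by
    have : (⇑D)^[m + n] (f * g) = (⇑D)^[m + n - 1] (D (f * g)) := by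
      rw [← Function.iterate_succ_apply]; congr 1; omega
    rw [this, hDfg, iter0 (m + n - 1)]
  rw [iterate_D_mul] at hiter
  have hsum : ∑ i ∈ range (m + n).succ,
      ((m + n).choose i • ((⇑D)^[m + n - i] f * (⇑D)^[i] g))
      = (m + n).choose n • ((⇑D)^[m] f * (⇑D)^[n] g) := by
    rw [Finset.sum_eq_single n]
    · rw [Nat.add_sub_cancel]
    · intro i hi hne
      rcases lt_or_gt_of_ne hne with h | h
      · rw [hm2 (m + n - i) (by omega), zero_mul, smul_zero]
      · rw [hn2 i h, mul_zero, smul_zero]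
    · intro h; exact absurd (mem_range.mpr (by omega)) h
  rw [hsum] at hiter
  have hc : ((m + n).choose n : B) ≠ 0 := by
    exact_mod_cast Nat.cast_ne_zero.mpr (Nat.choose_pos (by omega)).ne'
  have : ((m + n).choose n : B) * ((⇑D)^[m] f * (⇑D)^[n] g) = 0 := by
    rw [← nsmul_eq_mul]; exact hiter
  rcases mul_eq_zero.mp this with h | h
  · exact hc h
  · rcases mul_eq_zero.mp h with h | h
    · exact hm1 h
    · exact hn1 h


/-- The kernel of a locally nilpotent derivation of a domain is inert. -/
theorem stmt_5 {k B : Type*} [Field k] [CharZero k] [CommRing B] [IsDomain B] [Algebra k B]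
    (D : Derivation k B B) (hD : IsLND D) :
    ∀ f g : B, f ≠ 0 → g ≠ 0 → D (f * g) = 0 → D f = 0 ∧ D g = 0 := by
  intro f g hf hg hfg
  constructor
  · by_contra h
    exact key D hD f g h hg hfg
  · by_contra h
    exact key D hD g f h hf (by rwa [mul_comm])
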